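/- (Proposition 5: generation of an unperturbed LRE under a sinusoidal disturbance.) Let θ ∈ ℝ, μ = (μ₁, μ₂) ∈ ℝ², and let Δ_F, Y_F, ξ_F : [0,∞) → ℝ and φ : [0,∞) → ℝ² be continuous functions satisfying Y_F(t) = Δ_F(t)·θ + ξ_F(t) and ξ_F(t) = φ(t)ᵀμ for all t ≥ 0. Define A_ξ(t) := [[0, Δ_F(t)], [−Δ_F(t), −1]] ∈ ℝ^{2×2}, e₂ := (0,1)ᵀ, and let z : [0,∞) → ℝ, r : [0,∞) → ℝ², Ω : [0,∞) → ℝ^{2×2}, Φ_ξ : [0,∞) → ℝ^{2×2} be differentiable solutions of z'(t) = −z(t) − Y_F(t) with z(0) = 0; r'(t) = A_ξ(t)·r(t) + (−Δ_F(t)·z(t), 0)ᵀ with r(0) = 0; Ω'(t) = A_ξ(t)·Ω(t) − e₂·φ(t)ᵀ with Ω(0) = 0; and Φ_ξ'(t) = A_ξ(t)·Φ_ξ(t) with Φ_ξ(0) = I₂. Then for all t ≥ 0: z(t) − r₂(t) = (Φ_ξ)_{2,1}(t)·θ + Ω_{2,1}(t)·μ₁ + Ω_{2,2}(t)·μ₂.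 -/

import Mathlib

open Matrix

/-- Proposition 5: generation of an unperturbed LRE under a (filtered)
sinusoidal disturbance via the GPEBO dynamic extension. -/
theorem gpebo_disturbance_lre
    (θ μ₁ μ₂ : ℝ)
    (ΔF YF ξF : ℝ → ℝ) (φ : ℝ → Fin 2 → ℝ)
    (hΔFcont : ContinuousOn ΔF (Set.Ici 0))
    (hYFcont : ContinuousOn YF (Set.Ici 0))
    (hξFcont : ContinuousOn ξF (Set.Ici 0))
    (hφcont : ContinuousOn φ (Set.Ici 0))
    (hYF : ∀ t ≥ (0 : ℝ), YF t = ΔF t * θ + ξF t)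
    (hξF : ∀ t ≥ (0 : ℝ), ξF t = φ t ⬝ᵥ ![μ₁, μ₂])
    (Aξ : ℝ → Matrix (Fin 2) (Fin 2) ℝ)
    (hAξ : ∀ t, Aξ t = !![0, ΔF t; -ΔF t, -1])
    (z : ℝ → ℝ) (hz0 : z 0 = 0)
    (hz : ∀ t ≥ (0 : ℝ), HasDerivAt z (-(z t) - YF t) t)
    (r : ℝ → Fin 2 → ℝ) (hr0 : r 0 = 0)
    (hr : ∀ t ≥ (0 : ℝ), HasDerivAt r
      ((Aξ t).mulVec (r t) + ![-(ΔF t * z t), 0]) t)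
    (Ω : ℝ → Matrix (Fin 2) (Fin 2) ℝ) (hΩ0 : Ω 0 = 0)
    (hΩ : ∀ t ≥ (0 : ℝ), ∀ i j, HasDerivAt (fun s => Ω s i j)
      ((Aξ t * Ω t - Matrix.vecMulVec ![0, 1] (φ t)) i j) t)
    (Φξ : ℝ → Matrix (Fin 2) (Fin 2) ℝ) (hΦξ0 : Φξ 0 = 1)
    (hΦξ : ∀ t ≥ (0 : ℝ), ∀ i j, HasDerivAt (fun s => Φξ s i j)
      ((Aξ t * Φξ t) i j) t) :
    ∀ t ≥ (0 : ℝ),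
      z t - r t 1 = Φξ t 1 0 * θ + Ω t 1 0 * μ₁ + Ω t 1 1 * μ₂ := by
  -- auxiliary functions
  set η₁ : ℝ → ℝ := fun s => r s 0 + Φξ s 0 0 * θ + Ω s 0 0 * μ₁ + Ω s 0 1 * μ₂ with hη₁def
  set η₂ : ℝ → ℝ := fun s => r s 1 + Φξ s 1 0 * θ + Ω s 1 0 * μ₁ + Ω s 1 1 * μ₂ with hη₂def
  set V : ℝ → ℝ := fun s => (η₁ s - θ)^2 + (η₂ s - z s)^2 with hVdef
  have hDη₁ : ∀ s ≥ (0:ℝ), HasDerivAt η₁ (ΔF s * (η₂ s - z s)) s := by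
    intro s hs
    have h1 := hasDerivAt_pi.1 (hr s hs) 0
    have h2 := (hΦξ s hs 0 0).mul_const θ
    have h3 := (hΩ s hs 0 0).mul_const μ₁
    have h4 := (hΩ s hs 0 1).mul_const μ₂
    have := ((h1.add h2).add h3).add h4
    refine this.congr_deriv ?_
    rw [Matrix.sub_apply, Matrix.sub_apply]
    simp [hAξ, Matrix.mul_apply, Matrix.mulVec, Matrix.vecMulVec_apply,
      Matrix.vecMul, dotProduct, Fin.sum_univ_two, Matrix.sub_apply, Pi.sub_apply, hη₂def]
    ring
  have hDη₂ : ∀ s ≥ (0:ℝ), HasDerivAt η₂ (-(ΔF s) * (η₁ s) - η₂ s - ξF s) s := by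
    intro s hs
    have h1 := hasDerivAt_pi.1 (hr s hs) 1
    have h2 := (hΦξ s hs 1 0).mul_const θ
    have h3 := (hΩ s hs 1 0).mul_const μ₁
    have h4 := (hΩ s hs 1 1).mul_const μ₂
    have := ((h1.add h2).add h3).add h4
    refine this.congr_deriv ?_
    rw [hξF s hs, Matrix.sub_apply, Matrix.sub_apply]
    simp [hAξ, Matrix.mul_apply, Matrix.mulVec, Matrix.vecMulVec_apply,
      Matrix.vecMul, dotProduct, Fin.sum_univ_two, Matrix.sub_apply, Pi.sub_apply, hη₁def, hη₂def]
    ring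
  have hDV : ∀ s ≥ (0:ℝ), HasDerivAt V (-2 * (η₂ s - z s)^2) s := by
    intro s hs
    have h1 : HasDerivAt (fun u => (η₁ u - θ)^2)
        (2 * (η₁ s - θ) * (ΔF s * (η₂ s - z s))) s := by
      have := ((hDη₁ s hs).sub_const θ).pow 2
      refine this.congr_deriv ?_; ring
    have hz' := hz s hs
    have h2 : HasDerivAt (fun u => (η₂ u - z u)^2)
        (2 * (η₂ s - z s) * ((-(ΔF s) * (η₁ s) - η₂ s - ξF s) - (-(z s) - YF s))) s := by
      have := ((hDη₂ s hs).sub hz').pow 2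
      refine this.congr_deriv ?_; simp only [Pi.sub_apply]; ring
    have := h1.add h2
    refine this.congr_deriv ?_
    rw [hYF s hs]
    ring
  have hVcont : ContinuousOn V (Set.Ici 0) :=
    fun x hx => ((hDV x hx).continuousAt).continuousWithinAt
  have hanti : AntitoneOn V (Set.Ici 0) := by
    apply antitoneOn_of_deriv_nonpos (convex_Ici 0) hVcont
    · intro x hx
      rw [interior_Ici] at hx
      exact ((hDV x (le_of_lt hx)).differentiableAt).differentiableWithinAt
    · intro x hx
      rw [interior_Ici] at hx
      rw [(hDV x (le_of_lt hx)).deriv]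
      nlinarith [sq_nonneg (η₂ x - z x)]
  have hV0 : V 0 = 0 := by
    simp [hVdef, hη₁def, hη₂def, hr0, hΩ0, hΦξ0, hz0, Matrix.one_apply]
  intro t ht
  have hVt : V t ≤ 0 := hV0 ▸ hanti Set.self_mem_Ici ht ht
  have hVt' : (η₁ t - θ)^2 + (η₂ t - z t)^2 ≤ 0 := hVt
  have h2 : (η₂ t - z t)^2 = 0 := by nlinarith [sq_nonneg (η₁ t - θ), sq_nonneg (η₂ t - z t)]
  have : η₂ t - z t = 0 := by
    exact pow_eq_zero_iff (by norm_num) |>.1 h2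
  simp only [hη₂def] at this
  linarith
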